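/- Let 2 < p < q be odd primes and let ρ and σ be the unique non-negative integers with 1 + pq = (ρ+1)p + (σ+1)q. Then for every prime r > q and every integer k ≥ 0 one has |a_{pqr}(k)| ≤ p + ρ - σ if ρ ≤ σ, and |a_{pqr}(k)| ≤ q + σ - ρ if ρ > σ; that is, M(p;q) ≤ p + ρ - σ if ρ ≤ σ and M(p;q) ≤ q + σ - ρ if ρ > σ. -/

import Mathlib

set_option linter.unusedSectionVars false
set_option maxHeartbeats 1000000

open Polynomial Finset

/-- `cyclCoeff n k` is the coefficient of `x^k` in the `n`-th cyclotomic polynomial over `ℤ`. -/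
noncomputable def cyclCoeff (n k : ℕ) : ℤ := (Polynomial.cyclotomic n ℤ).coeff k

/-- geometric-type sum -/
noncomputable def SS (e a : ℕ) : ℤ[X] := ∑ x ∈ Finset.range a, ((X : ℤ[X]) ^ e) ^ x

noncomputable def FF (p q a b c d : ℕ) : ℤ[X] :=
  SS p a * SS q b - X * (SS p c * SS q d)

lemma SS_mul (e a : ℕ) : SS e a * ((X : ℤ[X]) ^ e - 1) = X ^ (e * a) - 1 := by
  rw [SS, geom_sum_mul, ← pow_mul]

lemma FF_mul (p q a b c d : ℕ) (h1 : a * p + b * q = p * q + 1)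
    (h2 : a + c = q) (h3 : b + d = p) :
    FF p q a b c d * ((X ^ p - 1) * ((X : ℤ[X]) ^ q - 1)) = (X ^ (p * q) - 1) * (X - 1) := by
  have hpa : p * a + p * c = p * q := by rw [← Nat.mul_add, h2]
  have hqb : q * b + q * d = q * p := by rw [← Nat.mul_add, h3]
  have h1' : p * a + q * b = p * q + 1 := by
    rw [mul_comm a p, mul_comm b q] at h1; exact h1
  have hm1 : (X : ℤ[X]) ^ (p * a) * X ^ (q * b) = X ^ (p * q) * X := by
    rw [← pow_add]
    have : p * a + q * b = p * q + 1 := h1'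
    rw [this, pow_succ]
  have hm2 : (X : ℤ[X]) * X ^ (p * c) = X ^ (q * b) := by
    rw [← pow_succ']
    congr 1
    have hqp : q * p = p * q := Nat.mul_comm q p
    linarith [hpa, hqb, h1']
  have hm3 : (X : ℤ[X]) * X ^ (q * d) = X ^ (p * a) := by
    rw [← pow_succ']
    congr 1
    have hqp : q * p = p * q := Nat.mul_comm q p
    linarith [hpa, hqb, h1']
  have hm4 : (X : ℤ[X]) * (X ^ (p * c) * X ^ (q * d)) = X ^ (p * q) := by
    rw [← pow_add, ← pow_succ']
    congr 1
    have hqp : q * p = p * q := Nat.mul_comm q p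
    linarith [hpa, hqb, h1']
  have e1 : (SS p a * SS q b) * ((X ^ p - 1) * ((X : ℤ[X]) ^ q - 1))
      = (X ^ (p * a) - 1) * (X ^ (q * b) - 1) := by
    calc (SS p a * SS q b) * ((X ^ p - 1) * ((X : ℤ[X]) ^ q - 1))
        = (SS p a * (X ^ p - 1)) * (SS q b * (X ^ q - 1)) := by ring
      _ = (X ^ (p * a) - 1) * (X ^ (q * b) - 1) := by rw [SS_mul, SS_mul]
  have e2 : (SS p c * SS q d) * ((X ^ p - 1) * ((X : ℤ[X]) ^ q - 1))
      = (X ^ (p * c) - 1) * (X ^ (q * d) - 1) := by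
    calc (SS p c * SS q d) * ((X ^ p - 1) * ((X : ℤ[X]) ^ q - 1))
        = (SS p c * (X ^ p - 1)) * (SS q d * (X ^ q - 1)) := by ring
      _ = (X ^ (p * c) - 1) * (X ^ (q * d) - 1) := by rw [SS_mul, SS_mul]
  rw [FF, sub_mul, mul_assoc X, e1, e2]
  linear_combination hm1 - hm4 + hm2 + hm3

lemma cycl_pq_mul (p q : ℕ) (hp : p.Prime) (hq : q.Prime) (hne : p ≠ q) :
    cyclotomic (p * q) ℤ * ((X ^ p - 1) * ((X : ℤ[X]) ^ q - 1)) = (X ^ (p * q) - 1) * (X - 1) := by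
  have hdvd : ¬ q ∣ p := fun h => hne ((Nat.prime_dvd_prime_iff_eq hq hp).mp h).symm
  have e1 : expand ℤ q (cyclotomic p ℤ) = cyclotomic (p * q) ℤ * cyclotomic p ℤ :=
    cyclotomic_expand_eq_cyclotomic_mul hq hdvd ℤ
  haveI := Fact.mk hp
  have e2 : cyclotomic p ℤ * (X - 1) = X ^ p - 1 := cyclotomic_prime_mul_X_sub_one ℤ p
  have e3 : expand ℤ q (cyclotomic p ℤ) * ((X : ℤ[X]) ^ q - 1) = X ^ (p * q) - 1 := by
    have := congrArg (expand ℤ q) e2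
    rw [map_mul, map_sub, map_sub, map_one, map_pow, expand_X] at this
    rw [this, ← pow_mul, Nat.mul_comm q p]
  calc cyclotomic (p * q) ℤ * ((X ^ p - 1) * ((X : ℤ[X]) ^ q - 1))
      = (cyclotomic (p * q) ℤ * cyclotomic p ℤ * ((X : ℤ[X]) ^ q - 1)) * (X - 1) := by
        rw [← e2]; ring
    _ = (X ^ (p * q) - 1) * (X - 1) := by rw [← e1, e3]


lemma X_pow_sub_one_ne_zero {n : ℕ} (hn : 0 < n) : ((X : ℤ[X]) ^ n - 1) ≠ 0 := by
  intro h
  have := congrArg (fun f : ℤ[X] => f.coeff 0) h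
  have hn' : (0 : ℕ) ≠ n := by omega
  simp [coeff_X_pow, hn'] at this

section Main
variable {p q ρ σ : ℕ} (hp : p.Prime) (hq : q.Prime) (h2p : 2 < p) (hpq : p < q)
  (hρσ : 1 + p * q = (ρ + 1) * p + (σ + 1) * q)

include hp hq h2p hpq hρσ

lemma hρq' : ρ + 2 ≤ q := by
  by_contra h
  push_neg at h
  have h1 : q * p ≤ (ρ + 1) * p := Nat.mul_le_mul_right _ (by omega)
  have h2 : q ≤ (σ + 1) * q := Nat.le_mul_of_pos_left _ (by omega)
  rw [Nat.mul_comm q p] at h1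
  have := hq.two_le
  linarith

lemma hσp' : σ + 2 ≤ p := by
  by_contra h
  push_neg at h
  have h1 : p * q ≤ (σ + 1) * q := Nat.mul_le_mul_right _ (by omega)
  have h2 : p ≤ (ρ + 1) * p := Nat.le_mul_of_pos_left _ (by omega)
  have := hp.two_le
  linarith

lemma cyclotomic_pq_eq :
    cyclotomic (p * q) ℤ = FF p q (ρ + 1) (σ + 1) (q - 1 - ρ) (p - 1 - σ) := by
  have hρq' := hρq' hp hq h2p hpq hρσ
  have hσp' := hσp' hp hq h2p hpq hρσ
  have key := FF_mul p q (ρ + 1) (σ + 1) (q - 1 - ρ) (p - 1 - σ)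
    (by linarith) (by omega) (by omega)
  have hM : (((X : ℤ[X]) ^ p - 1) * ((X : ℤ[X]) ^ q - 1)) ≠ 0 :=
    mul_ne_zero (X_pow_sub_one_ne_zero hp.pos) (X_pow_sub_one_ne_zero hq.pos)
  exact mul_right_cancel₀ hM ((cycl_pq_mul p q hp hq hpq.ne).trans key.symm)

end Main

lemma FF_coeff (p q a b c d m : ℕ) :
    (FF p q a b c d).coeff m =
      ((((range a) ×ˢ (range b)).filter (fun z => m = p * z.1 + q * z.2)).card : ℤ)
      - ((((range c) ×ˢ (range d)).filter (fun z => m = p * z.1 + q * z.2 + 1)).card : ℤ) := by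
  have e1 : ∀ (a' b' : ℕ), SS p a' * SS q b'
      = ∑ z ∈ (range a') ×ˢ (range b'), (X : ℤ[X]) ^ (p * z.1 + q * z.2) := by
    intro a' b'
    rw [SS, SS, Finset.sum_mul_sum, ← Finset.sum_product']
    apply Finset.sum_congr rfl
    intro z _
    rw [← pow_mul, ← pow_mul, ← pow_add]
  have e2 : FF p q a b c d
      = (∑ z ∈ (range a) ×ˢ (range b), (X : ℤ[X]) ^ (p * z.1 + q * z.2))
        - ∑ z ∈ (range c) ×ˢ (range d), (X : ℤ[X]) ^ (p * z.1 + q * z.2 + 1) := by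
    rw [FF, e1, e1, Finset.mul_sum]
    congr 1
    apply Finset.sum_congr rfl
    intro z _
    rw [← pow_succ']
  rw [e2, coeff_sub, finset_sum_coeff, finset_sum_coeff]
  congr 1
  · rw [Finset.sum_congr rfl (fun z _ => coeff_X_pow _ _), Finset.sum_boole]
  · rw [Finset.sum_congr rfl (fun z _ => coeff_X_pow _ _), Finset.sum_boole]

lemma rep_unique {p q : ℕ} (hp : p.Prime) (hq : q.Prime) (hne : p ≠ q)
    {x x' y y' : ℕ} (hx : x < q) (hx' : x' < q)
    (h : p * x + q * y = p * x' + q * y') : x = x' ∧ y = y' := by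
  have hco : Nat.Coprime p q := (Nat.coprime_primes hp hq).mpr hne
  have t1 : (p * x + q * y) % q = (p * x) % q := by
    rw [mul_comm q y, Nat.add_mul_mod_self_right]
  have t2 : (p * x' + q * y') % q = (p * x') % q := by
    rw [mul_comm q y', Nat.add_mul_mod_self_right]
  have hm : p * x ≡ p * x' [MOD q] := by
    unfold Nat.ModEq
    rw [← t1, ← t2, h]
  have hxx : x ≡ x' [MOD q] := Nat.ModEq.cancel_left_of_coprime hco.symm hm
  have hx1 : x = x' := by
    rwa [Nat.ModEq, Nat.mod_eq_of_lt hx, Nat.mod_eq_of_lt hx'] at hxx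
  subst hx1
  refine ⟨rfl, Nat.eq_of_mul_eq_mul_left hq.pos (Nat.add_left_cancel h)⟩

section Main
variable {p q ρ σ : ℕ} (hp : p.Prime) (hq : q.Prime) (h2p : 2 < p) (hpq : p < q)
  (hρσ : 1 + p * q = (ρ + 1) * p + (σ + 1) * q)
include hp hq h2p hpq hρσ

lemma cyclotomic_pq_coeff (m : ℕ) :
    ((cyclotomic (p*q) ℤ).coeff m = 0 ∨ (cyclotomic (p*q) ℤ).coeff m = 1
        ∨ (cyclotomic (p*q) ℤ).coeff m = -1)
    ∧ ((cyclotomic (p*q) ℤ).coeff m = 1 → ∃ x y, x ≤ ρ ∧ y ≤ σ ∧ m = p*x + q*y)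
    ∧ ((cyclotomic (p*q) ℤ).coeff m = -1 →
        ∃ x y, x < q-1-ρ ∧ y < p-1-σ ∧ m = p*x + q*y + 1) := by
  have hq2 := hρq' hp hq h2p hpq hρσ
  have hp2 := hσp' hp hq h2p hpq hρσ
  simp only [cyclotomic_pq_eq hp hq h2p hpq hρσ, FF_coeff]
  set T1 := (((range (ρ+1)) ×ˢ (range (σ+1))).filter (fun z => m = p * z.1 + q * z.2)) with hT1
  set T2 := (((range (q-1-ρ)) ×ˢ (range (p-1-σ))).filter
      (fun z => m = p * z.1 + q * z.2 + 1)) with hT2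
  have h1 : T1.card ≤ 1 := by
    refine Finset.card_le_one.mpr ?_
    intro z hz z' hz'
    rw [hT1, mem_filter, mem_product, mem_range, mem_range] at hz hz'
    have := rep_unique hp hq hpq.ne (by omega : z.1 < q) (by omega : z'.1 < q)
      (hz.2 ▸ hz'.2)
    exact Prod.ext this.1 this.2
  have h2 : T2.card ≤ 1 := by
    refine Finset.card_le_one.mpr ?_
    intro z hz z' hz'
    rw [hT2, mem_filter, mem_product, mem_range, mem_range] at hz hz'
    have heq : p * z.1 + q * z.2 = p * z'.1 + q * z'.2 :=
      Nat.add_right_cancel (hz.2 ▸ hz'.2)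
    have := rep_unique hp hq hpq.ne (by omega : z.1 < q) (by omega : z'.1 < q) heq
    exact Prod.ext this.1 this.2
  refine ⟨by omega, ?_, ?_⟩
  · intro h
    have hc : T1.card = 1 := by omega
    obtain ⟨z, hz⟩ := Finset.card_eq_one.mp hc
    have hzm : z ∈ T1 := by rw [hz]; exact mem_singleton_self z
    rw [hT1, mem_filter, mem_product, mem_range, mem_range] at hzm
    exact ⟨z.1, z.2, by omega, by omega, hzm.2⟩
  · intro h
    have hc : T2.card = 1 := by omega
    obtain ⟨z, hz⟩ := Finset.card_eq_one.mp hc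
    have hzm : z ∈ T2 := by rw [hz]; exact mem_singleton_self z
    rw [hT2, mem_filter, mem_product, mem_range, mem_range] at hzm
    exact ⟨z.1, z.2, hzm.1.1, hzm.1.2, hzm.2⟩
end Main

lemma coeff_big {p q ρ σ : ℕ} (hp : p.Prime) (hq : q.Prime) (h2p : 2 < p) (hpq : p < q)
    (hρσ : 1 + p * q = (ρ + 1) * p + (σ + 1) * q) (m : ℕ) (hm : p * q ≤ m) :
    (cyclotomic (p * q) ℤ).coeff m = 0 := by
  obtain ⟨hv, hpos, hneg⟩ := cyclotomic_pq_coeff hp hq h2p hpq hρσ m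
  have hq2 := hρq' hp hq h2p hpq hρσ
  have hp2 := hσp' hp hq h2p hpq hρσ
  rcases hv with h0 | h1 | hm1
  · exact h0
  · exfalso
    obtain ⟨x, y, hx, hy, he⟩ := hpos h1
    have e1 : p*x ≤ p*ρ := Nat.mul_le_mul_left p hx
    have e2 : q*y ≤ q*σ := Nat.mul_le_mul_left q hy
    have e3 : (ρ+1)*p = p*ρ + p := by ring
    have e4 : (σ+1)*q = q*σ + q := by ring
    omega
  · exfalso
    obtain ⟨x, y, hx, hy, he⟩ := hneg hm1
    have hx2 : x + ρ + 2 ≤ q := by omega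
    have hy2 : y + σ + 2 ≤ p := by omega
    have e1 : p*(x+ρ+2) ≤ p*q := Nat.mul_le_mul_left p hx2
    have e2 : q*(y+σ+2) ≤ q*p := Nat.mul_le_mul_left q hy2
    have e3 : p*(x+ρ+2) = p*x + p*ρ + 2*p := by ring
    have e4 : q*(y+σ+2) = q*y + q*σ + 2*q := by ring
    have e5 : q*p = p*q := by ring
    have e6 : (ρ+1)*p = p*ρ + p := by ring
    have e7 : (σ+1)*q = q*σ + q := by ring
    omega

/-- The geometric series with step k, inverse of 1 - X^k. -/
noncomputable def DD (k : ℕ) : PowerSeries ℤ :=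
  PowerSeries.mk fun i => if k ∣ i then 1 else 0

lemma DD_inv {k : ℕ} (hk : 0 < k) : ((1 : PowerSeries ℤ) - (PowerSeries.X) ^ k) * DD k = 1 := by
  ext n
  rw [sub_mul, one_mul, map_sub, PowerSeries.coeff_X_pow_mul', PowerSeries.coeff_one, DD,
    PowerSeries.coeff_mk]
  by_cases hkn : k ≤ n
  · rw [if_pos hkn, PowerSeries.coeff_mk]
    have hne : ¬ (n = 0) := by omega
    rw [if_neg hne]
    by_cases h1 : k ∣ n
    · have h2 : k ∣ n - k := Nat.dvd_sub h1 dvd_rfl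
      rw [if_pos h1, if_pos h2]; ring
    · have h2 : ¬ k ∣ n - k := fun hc => h1 (by
        have := Nat.dvd_add hc (dvd_refl k)
        rwa [Nat.sub_add_cancel hkn] at this)
      rw [if_neg h1, if_neg h2]; ring
  · rw [if_neg hkn]
    rcases Nat.eq_zero_or_pos n with rfl | hn
    · rw [if_pos (dvd_zero k), if_pos rfl]; ring
    · have h1 : ¬ k ∣ n := fun hc => hkn (Nat.le_of_dvd hn hc)
      rw [if_neg h1, if_neg (by omega : ¬ n = 0)]; ring

/-- Kaplan's polynomial identity. -/
lemma K1 (p q r : ℕ) (hp : p.Prime) (hq : q.Prime) (hr : r.Prime)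
    (hpq : p < q) (hqr : q < r) :
    cyclotomic (p * q * r) ℤ * ((X ^ (p * q) - 1) * ((X : ℤ[X]) - 1)) =
      expand ℤ r (cyclotomic (p * q) ℤ) * ((X ^ p - 1) * (X ^ q - 1)) := by
  have hdvd : ¬ r ∣ p * q := by
    intro h
    rcases (Nat.Prime.dvd_mul hr).mp h with h' | h'
    · exact absurd ((Nat.prime_dvd_prime_iff_eq hr hp).mp h') (by omega)
    · exact absurd ((Nat.prime_dvd_prime_iff_eq hr hq).mp h') (by omega)
  have e1 : expand ℤ r (cyclotomic (p * q) ℤ) = cyclotomic (p * q * r) ℤ * cyclotomic (p * q) ℤ :=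
    cyclotomic_expand_eq_cyclotomic_mul hr hdvd ℤ
  rw [e1, mul_assoc (cyclotomic (p * q * r) ℤ), cycl_pq_mul p q hp hq (by omega)]

/-- main power series identity -/
lemma main_PS (p q r : ℕ) (hp : p.Prime) (hq : q.Prime) (hr : r.Prime)
    (hpq : p < q) (hqr : q < r) :
    (cyclotomic (p * q * r) ℤ : PowerSeries ℤ) =
      (∑ j ∈ range p, (PowerSeries.X : PowerSeries ℤ) ^ j
          * ((expand ℤ r (cyclotomic (p * q) ℤ) : PowerSeries ℤ) * DD (p * q)))
      - ∑ j ∈ range p, (PowerSeries.X : PowerSeries ℤ) ^ (q + j)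
          * ((expand ℤ r (cyclotomic (p * q) ℤ) : PowerSeries ℤ) * DD (p * q)) := by
  set Xs : PowerSeries ℤ := PowerSeries.X with hXs
  set Z : PowerSeries ℤ := (expand ℤ r (cyclotomic (p * q) ℤ) : PowerSeries ℤ) * DD (p * q)
    with hZ
  set S : PowerSeries ℤ := ∑ j ∈ range p, Xs ^ j with hS
  have h1 : ((1 : PowerSeries ℤ) - Xs ^ (p * q)) * DD (p * q) = 1 :=
    DD_inv (Nat.mul_pos hp.pos hq.pos)
  have h2 : ((1 : PowerSeries ℤ) - Xs ^ 1) * DD 1 = 1 := DD_inv one_pos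
  have hK2 : (cyclotomic (p * q * r) ℤ : PowerSeries ℤ) * ((1 - Xs ^ (p * q)) * (1 - Xs)) =
      (expand ℤ r (cyclotomic (p * q) ℤ) : PowerSeries ℤ) * ((1 - Xs ^ p) * (1 - Xs ^ q)) := by
    have hc := congrArg (fun f : ℤ[X] => (f : PowerSeries ℤ)) (K1 p q r hp hq hr hpq hqr)
    push_cast at hc
    linear_combination hc
  have hgeo : S * (Xs - 1) = Xs ^ p - 1 := geom_sum_mul Xs p
  calc (cyclotomic (p * q * r) ℤ : PowerSeries ℤ)
      = (cyclotomic (p * q * r) ℤ : PowerSeries ℤ) *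
          (((1 - Xs ^ (p * q)) * DD (p * q)) * ((1 - Xs ^ 1) * DD 1)) := by
        rw [h1, h2]; ring
    _ = ((cyclotomic (p * q * r) ℤ : PowerSeries ℤ) * ((1 - Xs ^ (p * q)) * (1 - Xs ^ 1)))
          * (DD (p * q) * DD 1) := by ring
    _ = ((expand ℤ r (cyclotomic (p * q) ℤ) : PowerSeries ℤ) * ((1 - Xs ^ p) * (1 - Xs ^ q)))
          * (DD (p * q) * DD 1) := by rw [pow_one]; rw [hK2]
    _ = ((expand ℤ r (cyclotomic (p * q) ℤ) : PowerSeries ℤ) * ((S * (1 - Xs)) * (1 - Xs ^ q)))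
          * (DD (p * q) * DD 1) := by
        have : (1 : PowerSeries ℤ) - Xs ^ p = S * (1 - Xs) := by linear_combination hgeo
        rw [this]
    _ = (S * ((1 - Xs ^ q) * Z)) * ((1 - Xs ^ 1) * DD 1) := by rw [hZ]; ring
    _ = S * ((1 - Xs ^ q) * Z) := by rw [h2, mul_one]
    _ = ∑ j ∈ range p, Xs ^ j * ((1 - Xs ^ q) * Z) := by rw [hS, Finset.sum_mul]
    _ = ∑ j ∈ range p, (Xs ^ j * Z - Xs ^ (q + j) * Z) := by
        refine Finset.sum_congr rfl fun j _ => ?_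
        rw [pow_add]; ring
    _ = _ := Finset.sum_sub_distrib _ _

/-- The Kaplan-style coefficient formula. -/
lemma coeff_formula (p q r : ℕ) (hp : p.Prime) (hq : q.Prime) (hr : r.Prime)
    (hpq : p < q) (hqr : q < r) (n : ℕ) :
    (cyclotomic (p * q * r) ℤ).coeff n =
      (∑ j ∈ range p, if j ≤ n then
          PowerSeries.coeff (n - j)
            ((expand ℤ r (cyclotomic (p * q) ℤ) : PowerSeries ℤ) * DD (p * q)) else 0)
      - ∑ j ∈ range p, if q + j ≤ n then
          PowerSeries.coeff (n - (q + j))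
            ((expand ℤ r (cyclotomic (p * q) ℤ) : PowerSeries ℤ) * DD (p * q)) else 0 := by
  have h0 : (cyclotomic (p * q * r) ℤ).coeff n
      = PowerSeries.coeff n ((cyclotomic (p * q * r) ℤ : PowerSeries ℤ)) :=
    (Polynomial.coeff_coe _ _).symm
  rw [h0, main_PS p q r hp hq hr hpq hqr, map_sub, map_sum, map_sum]
  congr 1
  · exact Finset.sum_congr rfl fun j _ => PowerSeries.coeff_X_pow_mul' _ _ _
  · exact Finset.sum_congr rfl fun j _ => PowerSeries.coeff_X_pow_mul' _ _ _

lemma unique_m_aux {p q r : ℕ} (hco : Nat.Coprime (p * q) r)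
    {m m' b b' t : ℕ} (hle : m ≤ m') (hm' : m' < p * q)
    (he : r * m + b = t) (he' : r * m' + b' = t) (hb : p * q ∣ b) (hb' : p * q ∣ b') :
    m = m' := by
  obtain ⟨u, rfl⟩ := Nat.exists_eq_add_of_le hle
  have hru : r * (m + u) = r * m + r * u := by ring
  have hbb : b = r * u + b' := by linarith
  have hsub : b - b' = r * u := Nat.sub_eq_of_eq_add hbb
  have hdvd : p * q ∣ r * u := hsub ▸ Nat.dvd_sub hb hb'
  have hu : p * q ∣ u := hco.dvd_of_dvd_mul_left hdvd
  have : u = 0 := by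
    by_contra hu0
    have := Nat.le_of_dvd (by omega) hu
    omega
  omega

lemma unique_m {p q r : ℕ} (hco : Nat.Coprime (p * q) r)
    {m m' b b' t : ℕ} (hm : m < p * q) (hm' : m' < p * q)
    (he : r * m + b = t) (he' : r * m' + b' = t) (hb : p * q ∣ b) (hb' : p * q ∣ b') :
    m = m' := by
  rcases le_total m m' with h | h
  · exact unique_m_aux hco h hm' he he' hb hb'
  · exact (unique_m_aux hco h hm he' he hb' hb).symm

lemma c_char {p q ρ σ : ℕ} (hp : p.Prime) (hq : q.Prime) (h2p : 2 < p) (hpq : p < q)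
    (hρσ : 1 + p * q = (ρ + 1) * p + (σ + 1) * q)
    {r : ℕ} (hr : r.Prime) (hqr : q < r) (t : ℕ) :
    (PowerSeries.coeff t
        ((expand ℤ r (cyclotomic (p * q) ℤ) : PowerSeries ℤ) * DD (p * q)) = 0) ∨
    ∃ m, m < p * q ∧ r * m ≤ t ∧ (p * q) ∣ (t - r * m) ∧
      PowerSeries.coeff t
        ((expand ℤ r (cyclotomic (p * q) ℤ) : PowerSeries ℤ) * DD (p * q))
        = (cyclotomic (p * q) ℤ).coeff m := by
  classical
  have hco : Nat.Coprime (p * q) r :=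
    Nat.Coprime.mul ((Nat.coprime_primes hp hr).mpr (by omega))
      ((Nat.coprime_primes hq hr).mpr (by omega))
  have hterm : ∀ z ∈ Finset.HasAntidiagonal.antidiagonal t,
      (PowerSeries.coeff z.1 ((expand ℤ r (cyclotomic (p * q) ℤ) : PowerSeries ℤ)))
        * (PowerSeries.coeff z.2 (DD (p * q)))
      = if r ∣ z.1 ∧ (p * q) ∣ z.2 then (cyclotomic (p * q) ℤ).coeff (z.1 / r) else 0 := by
    intro z _
    rw [Polynomial.coeff_coe, Polynomial.coeff_expand hr.pos, DD, PowerSeries.coeff_mk]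
    by_cases h1 : r ∣ z.1 <;> by_cases h2 : (p * q) ∣ z.2 <;> simp [h1, h2]
  have hsum : PowerSeries.coeff t
      ((expand ℤ r (cyclotomic (p * q) ℤ) : PowerSeries ℤ) * DD (p * q))
      = ∑ z ∈ Finset.HasAntidiagonal.antidiagonal t,
          if r ∣ z.1 ∧ (p * q) ∣ z.2 then (cyclotomic (p * q) ℤ).coeff (z.1 / r) else 0 := by
    rw [PowerSeries.coeff_mul]
    exact Finset.sum_congr rfl hterm
  by_cases hex : ∃ m, m < p * q ∧ r * m ≤ t ∧ (p * q) ∣ (t - r * m)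
      ∧ (cyclotomic (p * q) ℤ).coeff m ≠ 0
  · right
    obtain ⟨m, hm1, hm2, hm3, hm4⟩ := hex
    refine ⟨m, hm1, hm2, hm3, ?_⟩
    have hother : ∀ z ∈ Finset.HasAntidiagonal.antidiagonal t, z ≠ (r * m, t - r * m) →
        (if r ∣ z.1 ∧ (p * q) ∣ z.2 then (cyclotomic (p * q) ℤ).coeff (z.1 / r) else 0) = 0 := by
      rintro ⟨a, b⟩ hz hne
      rw [Finset.HasAntidiagonal.mem_antidiagonal] at hz
      by_cases h1 : r ∣ a
      · obtain ⟨m', rfl⟩ := h1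
        by_cases h2 : (p * q) ∣ b
        · rw [if_pos ⟨dvd_mul_right r m', h2⟩]
          simp only [Nat.mul_div_cancel_left m' hr.pos]
          by_contra hnz
          have hm'lt : m' < p * q := by
            by_contra hge
            exact hnz (coeff_big hp hq h2p hpq hρσ m' (by omega))
          have heq : m' = m := unique_m hco hm'lt hm1 (by omega) (by omega : r * m + (t - r * m) = t) h2 hm3
          subst heq
          exact hne (by rw [Prod.mk.injEq]; exact ⟨rfl, by omega⟩)
        · rw [if_neg (by tauto)]
      · rw [if_neg (by tauto)]
    have hnotmem : (r * m, t - r * m) ∉ Finset.HasAntidiagonal.antidiagonal t →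
        (if r ∣ r * m ∧ (p * q) ∣ t - r * m then (cyclotomic (p * q) ℤ).coeff (r * m / r) else 0)
          = 0 := by
      intro hmem
      exact absurd (Finset.HasAntidiagonal.mem_antidiagonal.mpr (by omega)) hmem
    rw [hsum, Finset.sum_eq_single (r * m, t - r * m) hother hnotmem,
      if_pos ⟨dvd_mul_right r m, hm3⟩, Nat.mul_div_cancel_left m hr.pos]
  · left
    rw [hsum]
    apply Finset.sum_eq_zero
    rintro ⟨a, b⟩ hz
    rw [Finset.HasAntidiagonal.mem_antidiagonal] at hz
    by_cases h1 : r ∣ a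
    · obtain ⟨m', rfl⟩ := h1
      by_cases h2 : (p * q) ∣ b
      · rw [if_pos ⟨dvd_mul_right r m', h2⟩]
        simp only [Nat.mul_div_cancel_left m' hr.pos]
        by_contra hnz
        have hm'lt : m' < p * q := by
          by_contra hge
          exact hnz (coeff_big hp hq h2p hpq hρσ m' (by omega))
        refine hex ⟨m', hm'lt, by omega, ?_, hnz⟩
        have hb : t - r * m' = b := by omega
        rw [hb]; exact h2
      · rw [if_neg (by tauto)]
    · rw [if_neg (by tauto)]

/-- sum of a `{0, ±1}`-valued function equals number of `+1`s minus number of `-1`s -/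
lemma sum_pm (s : Finset ℕ) (f : ℕ → ℤ) (hf : ∀ j ∈ s, f j = 0 ∨ f j = 1 ∨ f j = -1) :
    ∑ j ∈ s, f j = ((s.filter (fun j => f j = 1)).card : ℤ)
      - ((s.filter (fun j => f j = -1)).card : ℤ) := by
  classical
  induction s using Finset.induction_on with
  | empty => simp
  | @insert a s ha ih =>
    rw [Finset.sum_insert ha, Finset.filter_insert, Finset.filter_insert]
    have hrest := ih (fun j hj => hf j (Finset.mem_insert_of_mem hj))
    have hnm1 : a ∉ s.filter (fun j => f j = 1) := fun hmem => ha (Finset.mem_of_mem_filter a hmem)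
    have hnm2 : a ∉ s.filter (fun j => f j = -1) := fun hmem => ha (Finset.mem_of_mem_filter a hmem)
    rcases hf a (Finset.mem_insert_self a s) with h | h | h
    · rw [if_neg (by rw [h]; norm_num), if_neg (by rw [h]; norm_num), h, hrest]; ring
    · rw [if_pos h, if_neg (by rw [h]; norm_num), Finset.card_insert_of_notMem hnm1, h, hrest]
      push_cast; ring
    · rw [if_neg (by rw [h]; norm_num), if_pos h, Finset.card_insert_of_notMem hnm2, h, hrest]
      push_cast; ring

lemma card_le_of_rel (s : Finset ℕ) (N : ℕ) (R : ℕ → ℕ → Prop)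
    (hex : ∀ j ∈ s, ∃ x, x < N ∧ R j x)
    (huniq : ∀ j ∈ s, ∀ j' ∈ s, ∀ x, R j x → R j' x → j = j') : s.card ≤ N := by
  classical
  have h := Finset.card_le_card_of_injOn
    (f := fun j => if h : j ∈ s then Classical.choose (hex j h) else 0)
    (s := s) (t := Finset.range N)
    (fun j hj => by
      simp only [dif_pos hj]
      exact Finset.mem_range.mpr (by rw [dif_pos (show j ∈ s from hj)]; exact (Classical.choose_spec (hex j hj)).1))
    (fun j hj j' hj' he => by
      simp only [Finset.mem_coe] at hj hj'
      simp only [dif_pos hj, dif_pos hj'] at he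
      exact huniq j hj j' hj' _ (Classical.choose_spec (hex j hj)).2
        (he ▸ (Classical.choose_spec (hex j' hj')).2))
  simpa using h

lemma eq_of_modeq_sub {d n u u' : ℕ} (hu : u ≤ n) (hu' : u' ≤ n)
    (h : (n - u) ≡ (n - u') [MOD d]) : u ≡ u' [MOD d] := by
  have h2 := h.add_right (u + u')
  have e1 : n - u + (u + u') = n + u' := by omega
  have e2 : n - u' + (u + u') = n + u := by omega
  rw [e1, e2] at h2
  exact (Nat.ModEq.add_left_cancel' n h2).symm

lemma modeq_of_rep {pq' d r n u m w y : ℕ} (hd : d ∣ pq') (h1 : r*m ≤ n - u)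
    (h2 : pq' ∣ (n - u) - r*m) (hm : m = w + d*y) : (n - u) ≡ r*w [MOD d] := by
  have hwm : w ≤ m := by omega
  have hrw : r*w ≤ r*m := Nat.mul_le_mul_left r hwm
  have hsplit : r*m = r*w + d*(r*y) := by rw [hm]; ring
  have ha : r*m ≡ (n - u) [MOD pq'] := (Nat.modEq_iff_dvd' h1).mpr h2
  have hb : r*m ≡ (n - u) [MOD d] := ha.of_dvd hd
  have hc : r*w ≡ r*m [MOD d] := (Nat.modEq_iff_dvd' hrw).mpr ⟨r*y, by omega⟩
  exact (hc.trans hb).symm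

lemma inj_card (s : Finset ℕ) (n off d N : ℕ) (g : ℕ → ℕ)
    (hmem : ∀ j ∈ s, j < d ∧ off + j ≤ n ∧ ∃ x, x < N ∧ (n - (off + j)) ≡ g x [MOD d]) :
    s.card ≤ N := by
  apply card_le_of_rel s N (fun j x => (n - (off + j)) ≡ g x [MOD d])
  · intro j hj; exact (hmem j hj).2.2
  · intro j hj j' hj' x h h'
    have h1 := hmem j hj
    have h2 := hmem j' hj'
    have h3 : (n - (off+j)) ≡ (n - (off+j')) [MOD d] := h.trans h'.symm
    have h4 : (off + j) ≡ (off + j') [MOD d] := eq_of_modeq_sub h1.2.1 h2.2.1 h3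
    have h5 : j ≡ j' [MOD d] := Nat.ModEq.add_left_cancel' off h4
    rwa [Nat.ModEq, Nat.mod_eq_of_lt h1.1, Nat.mod_eq_of_lt h2.1] at h5

/-- with `ρ, σ ≥ 0` the unique integers with `1 + pq = (ρ+1)p + (σ+1)q`,
one has `M(p;q) ≤ p + ρ - σ` if `ρ ≤ σ`, and `M(p;q) ≤ q + σ - ρ` if `ρ > σ`. -/
theorem stmt17 (p q : ℕ) (hp : p.Prime) (hq : q.Prime) (h2p : 2 < p) (hpq : p < q)
    (ρ σ : ℕ) (hρσ : 1 + p * q = (ρ + 1) * p + (σ + 1) * q) :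
    ∀ r k : ℕ, r.Prime → q < r →
      (ρ ≤ σ → |cyclCoeff (p * q * r) k| ≤ (p : ℤ) + (ρ : ℤ) - (σ : ℤ)) ∧
      (σ < ρ → |cyclCoeff (p * q * r) k| ≤ (q : ℤ) + (σ : ℤ) - (ρ : ℤ)) := by
  intro r n hr hqr
  classical
  have hq2 := hρq' hp hq h2p hpq hρσ
  have hp2 := hσp' hp hq h2p hpq hρσ
  set c : ℕ → ℤ := fun t => PowerSeries.coeff t
      ((expand ℤ r (cyclotomic (p * q) ℤ) : PowerSeries ℤ) * DD (p * q)) with hcdef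
  -- value set of c
  have hval : ∀ t, c t = 0 ∨ c t = 1 ∨ c t = -1 := by
    intro t
    rcases c_char hp hq h2p hpq hρσ hr hqr t with h | ⟨m, _, _, _, h⟩
    · left; exact h
    · have hct : c t = (cyclotomic (p*q) ℤ).coeff m := h
      rw [hct]
      exact (cyclotomic_pq_coeff hp hq h2p hpq hρσ m).1
  set f1 : ℕ → ℤ := fun j => if j ≤ n then c (n - j) else 0 with hf1def
  set f2 : ℕ → ℤ := fun j => if q + j ≤ n then c (n - (q + j)) else 0 with hf2def
  have hform : cyclCoeff (p * q * r) n = (∑ j ∈ range p, f1 j) - ∑ j ∈ range p, f2 j := by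
    rw [cyclCoeff, coeff_formula p q r hp hq hr hpq hqr n]
  have hv1 : ∀ j ∈ range p, f1 j = 0 ∨ f1 j = 1 ∨ f1 j = -1 := by
    intro j _; rw [hf1def]
    by_cases h : j ≤ n
    · simp only [if_pos h]; exact hval _
    · simp [h]
  have hv2 : ∀ j ∈ range p, f2 j = 0 ∨ f2 j = 1 ∨ f2 j = -1 := by
    intro j _; rw [hf2def]
    by_cases h : q + j ≤ n
    · simp only [if_pos h]; exact hval _
    · simp [h]
  set A1 := (range p).filter (fun j => f1 j = 1) with hA1
  set A2 := (range p).filter (fun j => f1 j = -1) with hA2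
  set B1 := (range p).filter (fun j => f2 j = 1) with hB1
  set B2 := (range p).filter (fun j => f2 j = -1) with hB2
  have hsum1 : ∑ j ∈ range p, f1 j = (A1.card : ℤ) - (A2.card : ℤ) := sum_pm _ _ hv1
  have hsum2 : ∑ j ∈ range p, f2 j = (B1.card : ℤ) - (B2.card : ℤ) := sum_pm _ _ hv2
  -- extract data from membership
  have hdataA : ∀ v : ℤ, ∀ j ∈ (range p).filter (fun j => f1 j = v), v ≠ 0 →
      j < p ∧ j ≤ n ∧ ∃ m, m < p * q ∧ r * m ≤ n - j ∧ (p*q) ∣ (n - j) - r * m ∧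
        (cyclotomic (p*q) ℤ).coeff m = v := by
    intro v j hj hv0
    rw [Finset.mem_filter, Finset.mem_range] at hj
    obtain ⟨hjp, hfj⟩ := hj
    have hfj' : (if j ≤ n then c (n - j) else 0) = v := hfj
    clear hfj
    rename' hfj' => hfj
    by_cases hjn : j ≤ n
    · rw [if_pos hjn] at hfj
      rcases c_char hp hq h2p hpq hρσ hr hqr (n - j) with h | ⟨m, h1, h2, h3, h4⟩
      · exfalso; apply hv0; rw [← hfj]; exact h
      · exact ⟨hjp, hjn, m, h1, h2, h3, h4.symm.trans hfj⟩
    · rw [if_neg hjn] at hfj; exact absurd hfj.symm hv0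
  have hdataB : ∀ v : ℤ, ∀ j ∈ (range p).filter (fun j => f2 j = v), v ≠ 0 →
      j < p ∧ q + j ≤ n ∧ ∃ m, m < p * q ∧ r * m ≤ n - (q+j) ∧
        (p*q) ∣ (n - (q+j)) - r * m ∧ (cyclotomic (p*q) ℤ).coeff m = v := by
    intro v j hj hv0
    rw [Finset.mem_filter, Finset.mem_range] at hj
    obtain ⟨hjp, hfj⟩ := hj
    have hfj' : (if q + j ≤ n then c (n - (q + j)) else 0) = v := hfj
    clear hfj
    rename' hfj' => hfj
    by_cases hjn : q + j ≤ n
    · rw [if_pos hjn] at hfj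
      rcases c_char hp hq h2p hpq hρσ hr hqr (n - (q+j)) with h | ⟨m, h1, h2, h3, h4⟩
      · exfalso; apply hv0; rw [← hfj]; exact h
      · exact ⟨hjp, hjn, m, h1, h2, h3, h4.symm.trans hfj⟩
    · rw [if_neg hjn] at hfj; exact absurd hfj.symm hv0
  -- the eight cardinality bounds
  have hqdvd : q ∣ p * q := dvd_mul_left q p
  have hpdvd : p ∣ p * q := dvd_mul_right p q
  have cA1x : A1.card ≤ ρ + 1 := by
    apply inj_card A1 n 0 q (ρ+1) (fun x => r * (p * x))
    intro j hj
    obtain ⟨hjp, hjn, m, hm1, hm2, hm3, hm4⟩ := hdataA 1 j hj one_ne_zero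
    obtain ⟨x, y, hx, hy, hxy⟩ := (cyclotomic_pq_coeff hp hq h2p hpq hρσ m).2.1 hm4
    refine ⟨by omega, by omega, x, by omega, ?_⟩
    have : (n - (0 + j)) = n - j := by omega
    rw [this]
    exact modeq_of_rep (y := y) hqdvd hm2 hm3 (by omega)
  have cA1y : A1.card ≤ σ + 1 := by
    apply inj_card A1 n 0 p (σ+1) (fun y => r * (q * y))
    intro j hj
    obtain ⟨hjp, hjn, m, hm1, hm2, hm3, hm4⟩ := hdataA 1 j hj one_ne_zero
    obtain ⟨x, y, hx, hy, hxy⟩ := (cyclotomic_pq_coeff hp hq h2p hpq hρσ m).2.1 hm4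
    refine ⟨by omega, by omega, y, by omega, ?_⟩
    have : (n - (0 + j)) = n - j := by omega
    rw [this]
    exact modeq_of_rep (y := x) hpdvd hm2 hm3 (by omega)
  have cA2x : A2.card ≤ q - 1 - ρ := by
    apply inj_card A2 n 0 q (q-1-ρ) (fun x => r * (p * x + 1))
    intro j hj
    obtain ⟨hjp, hjn, m, hm1, hm2, hm3, hm4⟩ := hdataA (-1) j hj (by norm_num)
    obtain ⟨x, y, hx, hy, hxy⟩ := (cyclotomic_pq_coeff hp hq h2p hpq hρσ m).2.2 hm4
    refine ⟨by omega, by omega, x, by omega, ?_⟩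
    have : (n - (0 + j)) = n - j := by omega
    rw [this]
    exact modeq_of_rep (y := y) hqdvd hm2 hm3 (by omega)
  have cA2y : A2.card ≤ p - 1 - σ := by
    apply inj_card A2 n 0 p (p-1-σ) (fun y => r * (q * y + 1))
    intro j hj
    obtain ⟨hjp, hjn, m, hm1, hm2, hm3, hm4⟩ := hdataA (-1) j hj (by norm_num)
    obtain ⟨x, y, hx, hy, hxy⟩ := (cyclotomic_pq_coeff hp hq h2p hpq hρσ m).2.2 hm4
    refine ⟨by omega, by omega, y, by omega, ?_⟩
    have : (n - (0 + j)) = n - j := by omega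
    rw [this]
    exact modeq_of_rep (y := x) hpdvd hm2 hm3 (by omega)
  have cB1x : B1.card ≤ ρ + 1 := by
    apply inj_card B1 n q q (ρ+1) (fun x => r * (p * x))
    intro j hj
    obtain ⟨hjp, hjn, m, hm1, hm2, hm3, hm4⟩ := hdataB 1 j hj one_ne_zero
    obtain ⟨x, y, hx, hy, hxy⟩ := (cyclotomic_pq_coeff hp hq h2p hpq hρσ m).2.1 hm4
    exact ⟨by omega, by omega, x, by omega, modeq_of_rep (y := y) hqdvd hm2 hm3 (by omega)⟩
  have cB1y : B1.card ≤ σ + 1 := by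
    apply inj_card B1 n q p (σ+1) (fun y => r * (q * y))
    intro j hj
    obtain ⟨hjp, hjn, m, hm1, hm2, hm3, hm4⟩ := hdataB 1 j hj one_ne_zero
    obtain ⟨x, y, hx, hy, hxy⟩ := (cyclotomic_pq_coeff hp hq h2p hpq hρσ m).2.1 hm4
    exact ⟨by omega, by omega, y, by omega, modeq_of_rep (y := x) hpdvd hm2 hm3 (by omega)⟩
  have cB2x : B2.card ≤ q - 1 - ρ := by
    apply inj_card B2 n q q (q-1-ρ) (fun x => r * (p * x + 1))
    intro j hj
    obtain ⟨hjp, hjn, m, hm1, hm2, hm3, hm4⟩ := hdataB (-1) j hj (by norm_num)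
    obtain ⟨x, y, hx, hy, hxy⟩ := (cyclotomic_pq_coeff hp hq h2p hpq hρσ m).2.2 hm4
    exact ⟨by omega, by omega, x, by omega, modeq_of_rep (y := y) hqdvd hm2 hm3 (by omega)⟩
  have cB2y : B2.card ≤ p - 1 - σ := by
    apply inj_card B2 n q p (p-1-σ) (fun y => r * (q * y + 1))
    intro j hj
    obtain ⟨hjp, hjn, m, hm1, hm2, hm3, hm4⟩ := hdataB (-1) j hj (by norm_num)
    obtain ⟨x, y, hx, hy, hxy⟩ := (cyclotomic_pq_coeff hp hq h2p hpq hρσ m).2.2 hm4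
    exact ⟨by omega, by omega, y, by omega, modeq_of_rep (y := x) hpdvd hm2 hm3 (by omega)⟩
  -- final arithmetic
  have heq : cyclCoeff (p * q * r) n
      = ((A1.card : ℤ) + B2.card) - ((A2.card : ℤ) + B1.card) := by
    rw [hform, hsum1, hsum2]; ring
  have key : ∀ B : ℤ, (A1.card : ℤ) + B2.card ≤ B → (A2.card : ℤ) + B1.card ≤ B →
      |cyclCoeff (p * q * r) n| ≤ B := by
    intro B hb1 hb2
    rcases abs_cases (cyclCoeff (p * q * r) n) with ⟨he, _⟩ | ⟨he, _⟩ <;>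
      rw [he] <;> rw [heq] <;>
      [linarith [Int.ofNat_nonneg A2.card, Int.ofNat_nonneg B1.card];
       linarith [Int.ofNat_nonneg A1.card, Int.ofNat_nonneg B2.card]]
  constructor
  · intro hle
    apply key
    · push_cast; omega
    · push_cast; omega
  · intro hlt
    apply key
    · push_cast; omega
    · push_cast; omega
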